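/- Let p : ℤ → LaurentPolynomial ℤ be defined by p n = 1 - (T + T⁻¹ - 2) * (T^n + T^(-n)) (where T denotes the Laurent variable). Then for all integers n and m, p n = p m if and only if n = m or n = -m. -/

import Mathlib

open LaurentPolynomial

/-- The family of symmetrized Alexander polynomials
`p n = 1 - (T + T⁻¹ - 2) * (T^n + T^(-n))` in `ℤ[T, T⁻¹]` satisfies
`p n = p m ↔ n = m ∨ n = -m`. -/
theorem stmt_0 (p : ℤ → LaurentPolynomial ℤ)
    (hp : ∀ n : ℤ, p n = 1 - (T 1 + T (-1) - 2) * (T n + T (-n))) :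
    ∀ n m : ℤ, p n = p m ↔ (n = m ∨ n = -m) := by
  intro n m
  constructor
  · intro h
    rw [hp n, hp m] at h
    have h2 : (T 1 + T (-1) - 2 : LaurentPolynomial ℤ) * (T n + T (-n)) =
        (T 1 + T (-1) - 2) * (T m + T (-m)) := by linear_combination -h
    have hq : (T 1 + T (-1) - 2 : LaurentPolynomial ℤ) ≠ 0 := by
      intro hq
      have hq' : (T 1 + T (-1) : LaurentPolynomial ℤ) = T 0 + T 0 := by
        rw [T_zero]; linear_combination hq
      have h1 : ((T 1 : LaurentPolynomial ℤ).coeff 1 + (T (-1) : LaurentPolynomial ℤ).coeff 1)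
          = (T 0 : LaurentPolynomial ℤ).coeff 1 + (T 0 : LaurentPolynomial ℤ).coeff 1 :=
        Finsupp.ext_iff.mp (congrArg AddMonoidAlgebra.coeff hq') 1
      simp only [T_apply] at h1
      norm_num at h1
    have h3 : (T n + T (-n) : LaurentPolynomial ℤ) = T m + T (-m) :=
      mul_left_cancel₀ hq h2
    have h4 : ((T n : LaurentPolynomial ℤ).coeff n + (T (-n) : LaurentPolynomial ℤ).coeff n)
        = (T m : LaurentPolynomial ℤ).coeff n + (T (-m) : LaurentPolynomial ℤ).coeff n :=
      Finsupp.ext_iff.mp (congrArg AddMonoidAlgebra.coeff h3) n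
    simp only [T_apply] at h4
    split_ifs at h4 <;> omega
  · rintro (rfl | rfl)
    · rfl
    · rw [hp, hp, neg_neg, add_comm (T (-m))]
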